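/- Let f be a Laurent polynomial over a characteristic-zero commutative ring R, p a prime, σ a Frobenius endomorphism of R, J = Δ(f)° ∩ ℤⁿ, and α_s the g×g matrix of coefficients of x^(p^s·v−u) in f^(p^s−1). Then for every s ≥ 1, α_s ≡ α_1 · σ(α_1) · σ²(α_1) ⋯ σ^{s−1}(α_1) mod p. -/

import Mathlib

open Finsupp Pointwise

abbrev hwIota (n : ℕ) (m : Fin n → ℤ) : Fin n → ℝ := fun i => (m i : ℝ)

lemma hwIota_add {n : ℕ} (a b : Fin n → ℤ) : hwIota n (a + b) = hwIota n a + hwIota n b := by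
  funext i; simp [hwIota]

/-- coefficientwise map on a Laurent-polynomial algebra -/
noncomputable def hwMap {R S : Type*} [CommRing R] [CommRing S] (π : R →+* S) {n : ℕ}
    (a : AddMonoidAlgebra R (Fin n → ℤ)) : AddMonoidAlgebra S (Fin n → ℤ) :=
  AddMonoidAlgebra.ofCoeff (Finsupp.mapRange π (map_zero π) a.coeff)

lemma hwMap_apply {R S : Type*} [CommRing R] [CommRing S] (π : R →+* S) {n : ℕ}
    (a : AddMonoidAlgebra R (Fin n → ℤ)) (x : Fin n → ℤ) : (hwMap π a).coeff x = π (a.coeff x) := rfl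

lemma hwMap_mul {R S : Type*} [CommRing R] [CommRing S] (π : R →+* S) {n : ℕ}
    (a b : AddMonoidAlgebra R (Fin n → ℤ)) :
    hwMap π (a * b) = hwMap π a * hwMap π b := by
  exact map_mul (AddMonoidAlgebra.mapRingHom (Fin n → ℤ) π) a b

lemma hwMap_pow {R S : Type*} [CommRing R] [CommRing S] (π : R →+* S) {n : ℕ}
    (a : AddMonoidAlgebra R (Fin n → ℤ)) (k : ℕ) :
    hwMap π (a ^ k) = (hwMap π a) ^ k := by
  induction k with
  | zero =>
    ext x
    simp only [pow_zero]
    rw [hwMap_apply]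
    rcases eq_or_ne x 0 with h | h <;>
      simp [AddMonoidAlgebra.one_def, h, Finsupp.single_apply]
  | succ k ih => rw [pow_succ, pow_succ, hwMap_mul, ih]

lemma hw_support_pow {S : Type*} [CommRing S] {n : ℕ} {Δ : Set (Fin n → ℝ)}
    (hΔ : Convex ℝ Δ) (g : AddMonoidAlgebra S (Fin n → ℤ))
    (hg : ∀ m ∈ g.coeff.support, hwIota n m ∈ Δ) :
    ∀ k : ℕ, 1 ≤ k → ∀ m ∈ (g ^ k).coeff.support, hwIota n m ∈ (k : ℝ) • Δ := by
  intro k hk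
  induction k, hk using Nat.le_induction with
  | base => intro m hm; rw [pow_one] at hm; simpa using hg m hm
  | succ k hk ih =>
    intro m hm
    rw [pow_succ] at hm
    have := AddMonoidAlgebra.support_coeff_mul_subset (g ^ k) g hm
    rw [Finset.mem_add] at this
    obtain ⟨a, ha, b, hb, hab⟩ := this
    have h1 : hwIota n m = hwIota n a + hwIota n b := by rw [← hab, hwIota_add]
    have h2 : ((k + 1 : ℕ) : ℝ) • Δ = (k : ℝ) • Δ + (1 : ℝ) • Δ := by
      rw [← hΔ.add_smul (by positivity) (by norm_num)]
      norm_num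
    rw [h2, h1]
    exact Set.add_mem_add (ih a ha) (by simpa using hg b hb)

lemma hw_interior {n : ℕ} {Δ : Set (Fin n → ℝ)} (hΔ : Convex ℝ Δ) {p : ℕ} (hp : 2 ≤ p)
    {u w : Fin n → ℤ} (hu : hwIota n u ∈ interior Δ)
    (hw : hwIota n ((p : ℤ) • w - u) ∈ ((p - 1 : ℕ) : ℝ) • Δ) :
    hwIota n w ∈ interior Δ := by
  obtain ⟨z, hz, hzeq⟩ := hw
  have hp0 : (0 : ℝ) < (p : ℝ) := by positivity
  have hc : ((p - 1 : ℕ) : ℝ) = (p : ℝ) - 1 := by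
    have : 1 ≤ p := by omega
    push_cast [Nat.cast_sub this]; ring
  have hkey : hwIota n w = ((p : ℝ)⁻¹) • hwIota n u + ((p : ℝ)⁻¹ * ((p : ℝ) - 1)) • z := by
    funext i
    have := congrFun hzeq i
    simp only [hwIota, Pi.smul_apply, Pi.sub_apply, Pi.add_apply, smul_eq_mul] at this ⊢
    push_cast at this
    rw [hc] at this
    field_simp
    nlinarith [this]
  rw [hkey]
  refine hΔ.combo_interior_self_mem_interior hu hz (by positivity) ?_ ?_
  · have : (1 : ℝ) ≤ (p : ℝ) := by exact_mod_cast (by omega : 1 ≤ p)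
    have h2 : (0:ℝ) ≤ (p:ℝ) - 1 := by linarith
    positivity
  · field_simp; ring

lemma hw_frob_expand {S : Type*} [CommRing S] (p : ℕ) [Fact p.Prime] [CharP S p] {n : ℕ}
    (g : AddMonoidAlgebra S (Fin n → ℤ)) :
    g ^ p = ∑ m ∈ g.coeff.support, AddMonoidAlgebra.single ((p : ℤ) • m) (g.coeff m ^ p) := by
  haveI : CharP (AddMonoidAlgebra S (Fin n → ℤ)) p :=
    charP_of_injective_algebraMap (R := S)
      (fun a b hab => by
        simpa [AddMonoidAlgebra.coe_algebraMap] using congrArg (fun x => AddMonoidAlgebra.coeff x 0) hab) p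
  conv_lhs => rw [← AddMonoidAlgebra.sum_coeff_single g]
  rw [Finsupp.sum, sum_pow_char]
  refine Finset.sum_congr rfl fun m _ => ?_
  rw [AddMonoidAlgebra.single_pow, natCast_zsmul]

lemma hw_key_step {S : Type*} [CommRing S] (p : ℕ) (hp : p.Prime) [CharP S p] {n : ℕ}
    (F : AddMonoidAlgebra S (Fin n → ℤ)) (Δ : Set (Fin n → ℝ)) (hΔ : Convex ℝ Δ)
    (hsupp : ∀ m ∈ F.coeff.support, hwIota n m ∈ Δ)
    (J : Finset (Fin n → ℤ))
    (hJ : ∀ w : Fin n → ℤ, w ∈ J ↔ hwIota n w ∈ interior Δ)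
    (s : ℕ) (u v : J) :
    (F ^ (p ^ (s + 1) - 1)).coeff ((p : ℤ) ^ (s + 1) • (v : Fin n → ℤ) - u)
      = ∑ w : J, (F ^ (p - 1)).coeff ((p : ℤ) • (w : Fin n → ℤ) - u) *
          ((F ^ (p ^ s - 1)).coeff ((p : ℤ) ^ s • (v : Fin n → ℤ) - w)) ^ p := by
  classical
  haveI : Fact p.Prime := ⟨hp⟩
  have hp2 : 2 ≤ p := hp.two_le
  set A : AddMonoidAlgebra S (Fin n → ℤ) := F ^ (p - 1) with hA
  set G : AddMonoidAlgebra S (Fin n → ℤ) := F ^ (p ^ s - 1) with hG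
  set t : Fin n → ℤ := (p : ℤ) ^ (s + 1) • (v : Fin n → ℤ) - u with ht
  -- the summand as a function of the "middle" lattice point
  set h : (Fin n → ℤ) → S := fun w =>
    A.coeff ((p : ℤ) • w - u) * (G.coeff ((p : ℤ) ^ s • (v : Fin n → ℤ) - w)) ^ p with hh
  have hwdef : ∀ w : Fin n → ℤ,
      h w = A.coeff ((p : ℤ) • w - u) * (G.coeff ((p : ℤ) ^ s • (v : Fin n → ℤ) - w)) ^ p :=
    fun w => rfl
  have hexp : p ^ (s + 1) - 1 = (p - 1) + (p ^ s - 1) * p := by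
    have h1 : 1 ≤ p ^ s := Nat.one_le_pow _ _ (by omega)
    have h2 : p ^ (s + 1) = p ^ s * p := pow_succ p s
    have h3 : (p ^ s - 1) * p = p ^ s * p - p := by rw [Nat.sub_mul, one_mul]
    have h4 : p ≤ p ^ s * p := Nat.le_mul_of_pos_left _ (by positivity)
    omega
  have hFs : F ^ (p ^ (s + 1) - 1) = A * G ^ p := by
    rw [hexp, pow_add, pow_mul]
  -- vanishing off `J`
  have hvanish : ∀ w : Fin n → ℤ, w ∉ J → h w = 0 := by
    intro w hwJ
    rcases eq_or_ne (A.coeff ((p : ℤ) • w - u)) 0 with h0 | h0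
    · rw [hwdef, h0, zero_mul]
    · exfalso
      apply hwJ
      rw [hJ]
      have hmem : ((p : ℤ) • w - u) ∈ A.coeff.support := Finsupp.mem_support_iff.mpr h0
      have hsup := hw_support_pow hΔ F hsupp (p - 1) (by omega) _ hmem
      exact hw_interior hΔ hp2 ((hJ u).mp u.2) hsup
  set T : Finset (Fin n → ℤ) :=
    G.coeff.support.image (fun m => (p : ℤ) ^ s • (v : Fin n → ℤ) - m) with hT
  have hvanish2 : ∀ w : Fin n → ℤ, w ∉ T → h w = 0 := by
    intro w hwT
    have : G.coeff ((p : ℤ) ^ s • (v : Fin n → ℤ) - w) = 0 := by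
      by_contra hne
      exact hwT (Finset.mem_image.mpr ⟨_, Finsupp.mem_support_iff.mpr hne, by abel⟩)
    rw [hwdef, this, zero_pow hp.ne_zero, mul_zero]
  calc (F ^ (p ^ (s + 1) - 1)).coeff t
      = ∑ m ∈ G.coeff.support, (A * AddMonoidAlgebra.single ((p : ℤ) • m) (G.coeff m ^ p)).coeff t := by
        rw [hFs, hw_frob_expand p G, Finset.mul_sum, AddMonoidAlgebra.coeff_sum, Finset.sum_apply']
    _ = ∑ m ∈ G.coeff.support, h ((p : ℤ) ^ s • (v : Fin n → ℤ) - m) := by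
        refine Finset.sum_congr rfl fun m _ => ?_
        rw [AddMonoidAlgebra.coeff_mul_single_apply, hwdef]
        congr 2
        · rw [ht]
          funext i
          simp only [Pi.sub_apply, Pi.smul_apply, smul_eq_mul]
          simp
          ring
        · congr 1
          abel
    _ = ∑ w ∈ T, h w := by
        rw [hT, Finset.sum_image]
        intro a _ b _ hab
        have := sub_right_injective hab
        exact this
    _ = ∑ w ∈ T ∩ J, h w := by
        refine (Finset.sum_subset Finset.inter_subset_left ?_).symm
        intro w hw hw2
        exact hvanish w (fun hJw => hw2 (Finset.mem_inter.mpr ⟨hw, hJw⟩))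
    _ = ∑ w ∈ J, h w := by
        refine Finset.sum_subset Finset.inter_subset_right ?_
        intro w hw hw2
        exact hvanish2 w (fun hTw => hw2 (Finset.mem_inter.mpr ⟨hTw, hw⟩))
    _ = ∑ w : J, h w := (Finset.sum_coe_sort J h).symm

/-- The Frobenius ring endomorphism `x ↦ x ^ p` in characteristic `p`. -/
noncomputable def hwFrob (S : Type*) [CommRing S] (p : ℕ) [Fact p.Prime] [CharP S p] :
    S →+* S := frobenius S p

lemma hwFrob_apply {S : Type*} [CommRing S] (p : ℕ) [Fact p.Prime] [CharP S p] (x : S) :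
    hwFrob S p x = x ^ p := rfl

/-- Theorem 1(i) of the paper:
`α_s ≡ α_1 · σ(α_1) · σ²(α_1) ⋯ σ^{s-1}(α_1) mod p`. -/
theorem higher_hasse_witt_mod_p {R : Type*} [CommRing R] {n : ℕ} (p : ℕ) (hp : p.Prime)
    (hchar : ∀ (N : ℕ) (r : R), N ≠ 0 → N • r = 0 → r = 0)
    (σ : R →+* R) (hσ : ∀ r : R, σ r - r ^ p ∈ Ideal.span {(p : R)})
    (f : AddMonoidAlgebra R (Fin n → ℤ))
    -- `J` is the set of interior lattice points of the Newton polytope of `f`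
    (J : Finset (Fin n → ℤ)) (hJne : J.Nonempty)
    (hJ : ∀ u : Fin n → ℤ, u ∈ J ↔ (fun i => (u i : ℝ)) ∈
      interior (convexHull ℝ ((fun (w : Fin n → ℤ) (i : Fin n) => (w i : ℝ)) '' f.coeff.support)))
    (α : ℕ → Matrix J J R)
    (hα : ∀ (s : ℕ) (u v : J), α s u v = (f ^ (p ^ s - 1)).coeff ((p : ℤ) ^ s • (v : Fin n → ℤ) - u))
    (s : ℕ) (hs : 1 ≤ s) (u v : J) :
    (α s - ((List.range s).map fun i => (α 1).map (⇑σ)^[i]).prod) u v ∈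
      Ideal.span {(p : R)} := by
  classical
  haveI : Fact p.Prime := ⟨hp⟩
  set I : Ideal R := Ideal.span {(p : R)} with hI
  set S := R ⧸ I with hS
  set π : R →+* S := Ideal.Quotient.mk I with hπ
  rw [← Ideal.Quotient.eq_zero_iff_mem]
  by_cases htriv : (1 : S) = 0
  · haveI : Subsingleton S := subsingleton_of_zero_eq_one htriv.symm
    exact Subsingleton.elim _ _
  have hpS : (p : S) = 0 := by
    rw [← map_natCast π p]
    exact Ideal.Quotient.eq_zero_iff_mem.mpr (Ideal.subset_span rfl)
  haveI : CharP S p := by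
    have hdvd : ringChar S ∣ p := ringChar.dvd hpS
    rcases (Nat.Prime.eq_one_or_self_of_dvd hp _ hdvd) with h1 | h1
    · exfalso
      apply htriv
      have := (ringChar.spec S 1).mpr (by rw [h1])
      simpa using this
    · exact h1 ▸ ringChar.charP S
  -- the image of `f` in the quotient
  set F : AddMonoidAlgebra S (Fin n → ℤ) := hwMap π f with hF
  set Δ : Set (Fin n → ℝ) := convexHull ℝ (hwIota n '' (f.coeff.support : Set (Fin n → ℤ))) with hΔdef
  have hΔ : Convex ℝ Δ := convex_convexHull ℝ _
  have hsupp : ∀ m ∈ F.coeff.support, hwIota n m ∈ Δ := by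
    intro m hm
    have : m ∈ f.coeff.support := Finsupp.support_mapRange (hf := map_zero π) hm
    exact subset_convexHull ℝ _ (Set.mem_image_of_mem _ this)
  have hJ' : ∀ w : Fin n → ℤ, w ∈ J ↔ hwIota n w ∈ interior Δ := hJ
  -- the reductions of the matrices mod p
  set β : ℕ → Matrix J J S := fun s' => (α s').map π with hβdef
  have hβ : ∀ (s' : ℕ) (u v : J),
      β s' u v = (F ^ (p ^ s' - 1)).coeff ((p : ℤ) ^ s' • (v : Fin n → ℤ) - u) := by
    intro s' u v
    show π (α s' u v) = _
    rw [hα, hF, ← hwMap_pow, hwMap_apply]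
  -- the fundamental recursion
  have hrec : ∀ s' : ℕ, β (s' + 1) = β 1 * (β s').map (hwFrob S p) := by
    intro s'
    ext a b
    rw [Matrix.mul_apply]
    rw [hβ (s' + 1) a b]
    rw [hw_key_step p hp F Δ hΔ hsupp J hJ' s' a b]
    refine Finset.sum_congr rfl fun w _ => ?_
    rw [Matrix.map_apply, hwFrob_apply, hβ 1 a w, hβ s' w b]
    norm_num
  -- the closed formula mod p, by induction
  have hclosed : ∀ s' : ℕ, 1 ≤ s' →
      β s' = ((List.range s').map fun i => (β 1).map (⇑(hwFrob S p))^[i]).prod := by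
    intro s' hs'
    induction s', hs' using Nat.le_induction with
    | base =>
      rw [show List.range 1 = [0] from rfl, List.map_singleton, List.prod_singleton,
        Function.iterate_zero, Matrix.map_id]
    | succ k hk ih =>
      rw [hrec k, ih]
      have hmapprod :
          (((List.range k).map fun i => (β 1).map (⇑(hwFrob S p))^[i]).prod).map
              (hwFrob S p)
            = ((List.range k).map fun i => (β 1).map (⇑(hwFrob S p))^[i + 1]).prod := by
        rw [show (((List.range k).map fun i => (β 1).map (⇑(hwFrob S p))^[i]).prod).map
              (hwFrob S p)
            = (hwFrob S p).mapMatrix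
              (((List.range k).map fun i => (β 1).map (⇑(hwFrob S p))^[i]).prod) from rfl]
        rw [map_list_prod, List.map_map]
        congr 1
        refine List.map_congr_left fun i _ => ?_
        show ((β 1).map (⇑(hwFrob S p))^[i]).map (hwFrob S p) = _
        rw [Matrix.map_map, ← Function.iterate_succ' (⇑(hwFrob S p)) i]
      rw [hmapprod, List.range_succ_eq_map, List.map_cons, List.prod_cons, List.map_map]
      congr 1
  -- transport the list product through `π`
  have hfrob : ∀ r : R, π (σ r) = hwFrob S p (π r) := by
    intro r
    rw [hwFrob_apply, ← map_pow]
    exact (Ideal.Quotient.mk_eq_mk_iff_sub_mem _ _).mpr (hσ r)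
  have hcomm : ∀ i : ℕ, ∀ r : R, π ((⇑σ)^[i] r) = (⇑(hwFrob S p))^[i] (π r) := by
    intro i
    induction i with
    | zero => intro r; simp
    | succ i ih =>
      intro r
      rw [Function.iterate_succ_apply', Function.iterate_succ_apply', hfrob, ih]
  -- transport the list product through `π`
  set L : Matrix J J R := ((List.range s).map fun i => (α 1).map (⇑σ)^[i]).prod with hL
  have hLmap : π.mapMatrix L = β s := by
    rw [hL, map_list_prod, List.map_map, hclosed s hs]
    congr 1
    refine List.map_congr_left fun i _ => ?_
    show ((α 1).map (⇑σ)^[i]).map π = (β 1).map (⇑(hwFrob S p))^[i]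
    rw [Matrix.map_map]
    have : ⇑π ∘ (⇑σ)^[i] = (⇑(hwFrob S p))^[i] ∘ ⇑π := funext fun r => hcomm i r
    rw [this, ← Matrix.map_map]
  have hfinal : π ((α s - L) u v) = β s u v - (π.mapMatrix L) u v := by
    rw [Matrix.sub_apply, map_sub]
    rfl
  rw [hfinal, hLmap, sub_self]
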